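/- Let Q be a quantale, F a solid multiplicative filter of Q, and q ∈ Q with q ∉ F. Then there exists a prime element p ∈ Q with q ≤ p and p ∉ F. -/

import Mathlib

universe u v

/-- A (commutative, integral) quantale: a complete lattice with a commutative monoid
structure whose unit is the top element and whose multiplication distributes over
arbitrary suprema. -/
class IntegralQuantale (Q : Type u) extends CompleteLattice Q, CommMonoid Q where
  one_eq_top : (1 : Q) = ⊤
  mul_sSup : ∀ (a : Q) (S : Set Q), a * sSup S = ⨆ b ∈ S, a * b
/-- A multiplicative filter of a quantale. -/
def IsMFilter {Q : Type u} [IntegralQuantale Q] (F : Set Q) : Prop :=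
  ⊤ ∈ F ∧ (∀ a ∈ F, ∀ b : Q, a ≤ b → b ∈ F) ∧ ∀ a ∈ F, ∀ b ∈ F, a * b ∈ F

/-- An m-filter is solid if whenever the supremum of a nonempty set belongs to it,
so does the supremum of some finite nonempty subset. -/
def IsSolid {Q : Type u} [IntegralQuantale Q] (F : Set Q) : Prop :=
  ∀ S : Set Q, S.Nonempty → sSup S ∈ F →
    ∃ S₀ : Finset Q, S₀.Nonempty ∧ ↑S₀ ⊆ S ∧ S₀.sup id ∈ F

section Aux

variable {Q : Type u} [IntegralQuantale Q]

lemma IQ.mul_sup (a b c : Q) : a * (b ⊔ c) = a * b ⊔ a * c := by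
  have h := IntegralQuantale.mul_sSup a {b, c}
  simpa [iSup_or, iSup_sup_eq] using h

lemma IQ.mul_le_mul_left' {b c : Q} (h : b ≤ c) (a : Q) : a * b ≤ a * c := by
  have : a * c = a * b ⊔ a * c := by rw [← IQ.mul_sup, sup_eq_right.mpr h]
  rw [this]; exact le_sup_left

lemma IQ.mul_le_left (a b : Q) : a * b ≤ a := by
  calc a * b ≤ a * ⊤ := IQ.mul_le_mul_left' le_top a
  _ = a * 1 := by rw [IntegralQuantale.one_eq_top]
  _ = a := mul_one a

end Aux

/-- Prime avoidance for solid filters: if `q ∉ F` with `F` solid, there is a prime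
element `p ≥ q` with `p ∉ F`. -/
theorem exists_prime_above_avoiding_solid_filter {Q : Type u} [IntegralQuantale Q]
    (F : Set Q) (hF : IsMFilter F) (hsolid : IsSolid F) (q : Q) (hq : q ∉ F) :
    ∃ p : Q, p ≠ ⊤ ∧ (∀ a b : Q, a * b ≤ p → a ≤ p ∨ b ≤ p) ∧ q ≤ p ∧ p ∉ F := by
  obtain ⟨hTop, hUp, hMul⟩ := hF
  set s : Set Q := {x | x ∉ F} with hs
  have key : ∀ c ⊆ s, IsChain (· ≤ ·) c → ∀ y ∈ c, ∃ ub ∈ s, ∀ z ∈ c, z ≤ ub := by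
    intro c hcs hc y hy
    refine ⟨sSup c, ?_, fun z hz => le_sSup hz⟩
    intro hmem
    obtain ⟨S₀, hS₀ne, hS₀sub, hS₀F⟩ := hsolid c ⟨y, hy⟩ hmem
    -- S₀ is a finite nonempty chain; take a maximal element
    obtain ⟨m, hm, hmax⟩ : ∃ m ∈ (S₀ : Set Q), ∀ x ∈ (S₀ : Set Q), id m ≤ id x → id m = id x := by
      obtain ⟨m, hm, hmax⟩ := (S₀.finite_toSet).exists_maximalFor id _ (by exact_mod_cast hS₀ne)
      exact ⟨m, hm, fun x hx h => le_antisymm h (hmax hx h)⟩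
    have hmub : ∀ x ∈ (S₀ : Set Q), x ≤ m := by
      intro x hx
      rcases eq_or_ne x m with rfl | hne
      · exact le_rfl
      · rcases hc (hS₀sub hx) (hS₀sub hm) hne with h | h
        · exact h
        · exact le_of_eq (hmax x hx h).symm
    have : S₀.sup id ≤ m := Finset.sup_le fun x hx => hmub x hx
    exact hcs (hS₀sub hm) (hUp _ hS₀F m this)
  obtain ⟨p, hqp, hpmem, hpmax⟩ := zorn_le_nonempty₀ s key q hq
  refine ⟨p, ?_, ?_, hqp, hpmem⟩
  · rintro rfl; exact hpmem hTop
  · intro a b hab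
    by_contra hcon
    push_neg at hcon
    obtain ⟨ha, hb⟩ := hcon
    have hpa : p ⊔ a ∈ F := by
      by_contra h
      exact ha (le_sup_right.trans (hpmax h le_sup_left))
    have hpb : p ⊔ b ∈ F := by
      by_contra h
      exact hb (le_sup_right.trans (hpmax h le_sup_left))
    have hle : (p ⊔ a) * (p ⊔ b) ≤ p := by
      rw [IQ.mul_sup]
      apply sup_le
      · rw [mul_comm]; exact IQ.mul_le_left _ _
      · rw [mul_comm, IQ.mul_sup]
        refine sup_le ?_ ?_
        · rw [mul_comm]; exact IQ.mul_le_left _ _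
        · rw [mul_comm]; exact hab
    exact hpmem (hUp _ (hMul _ hpa _ hpb) p hle)
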